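/- Let ℬ = (x_i)_{i∈ℕ} be a C-s-w-semi-greedy Markushevich basis of 𝕏 (C > 0, 0 < s ≤ 1) for a weight w = (w_i), and set C₁ := 3C·s⁻¹·(1 + λλ′)·λ·max{2·inf_{j∈ℕ} w_j⁻¹, 1}. Then: (i) for every finite A ⊂ ℕ and every ε ∈ E_A, ‖1_{ε,A}‖ ≤ C₁·max{w(A), 1}; (ii) for every x* ∈ 𝕏* with ‖x*‖ = 1, w({j ∈ ℕ : |x*(x_j)| > C₁·w_j}) ≤ 1; (iii) for every m ∈ ℕ, the conditionality parameter satisfies k_m ≤ C₁·λ′·max{sup{w(A) : A ⊂ ℕ, |A| ≤ m}, 1}, where k_m := sup{‖P_A‖ : A ⊂ ℕ, |A| ≤ m} (operator norm). -/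

import Mathlib

open scoped BigOperators ENNReal
open Filter

noncomputable section

namespace GreedyPaper

variable {𝕜 : Type*} [RCLike 𝕜] {X : Type*} [NormedAddCommGroup X] [NormedSpace 𝕜 X]

/-- Support of `x` with respect to the coordinate functionals `f`. -/
def msupp (f : ℕ → X →L[𝕜] 𝕜) (x : X) : Set ℕ := {i | f i x ≠ 0}

/-- Projection onto a finite set of coordinates. -/
def proj (e : ℕ → X) (f : ℕ → X →L[𝕜] 𝕜) (A : Finset ℕ) (x : X) : X :=
  ∑ i ∈ A, f i x • e i

/-- `A` is an `m`-`t`-greedy set for `x`: `|A| = m` and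
`min_{j ∈ A} |f j x| ≥ t · sup_{k ∉ A} |f k x|`. -/
def GreedySet (f : ℕ → X →L[𝕜] 𝕜) (x : X) (m : ℕ) (t : ℝ) (A : Finset ℕ) : Prop :=
  A.card = m ∧ ∀ j ∈ A, ∀ k ∉ A, t * ‖f k x‖ ≤ ‖f j x‖

/-- `w`-measure of a set of indices, with value in `ℝ≥0∞` (possibly infinite). -/
def wsum (w : ℕ → ℝ) (S : Set ℕ) : ℝ≥0∞ := ∑' i : S, ENNReal.ofReal (w i)

/-- Sign of a scalar: `sgn 0 = 1` and `sgn t * t = |t|`. -/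
def sgn (t : 𝕜) : 𝕜 := if t = 0 then 1 else (‖t‖ : 𝕜) / t

/-- A Markushevich basis (with the boundedness assumptions of the paper):
biorthogonality, dense span, totality of the coordinate functionals, and boundedness
of both the basis vectors and the coordinate functionals. -/
structure IsMarkushevichBasis (e : ℕ → X) (f : ℕ → X →L[𝕜] 𝕜) : Prop where
  biorth : ∀ i j, f i (e j) = if i = j then 1 else 0
  dense_span : Dense ((Submodule.span 𝕜 (Set.range e) : Submodule 𝕜 X) : Set X)
  total : ∀ x : X, (∀ i, f i x = 0) → x = 0
  bddE : BddAbove (Set.range fun i => ‖e i‖)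
  bddF : BddAbove (Set.range fun i => ‖f i‖)

/-- `ℬ` is `C`-`s`-`w`-semi-greedy: for every `x` and `m` there are an `m`-`s`-greedy set `A`
and `y` supported in `A` with `‖x - y‖ ≤ C · inf {‖x - z‖ : supp z finite, w(supp z) ≤ w(A)}`. -/
def SemiGreedy (e : ℕ → X) (f : ℕ → X →L[𝕜] 𝕜) (w : ℕ → ℝ) (C s : ℝ) : Prop :=
  ∀ (x : X) (m : ℕ), ∃ A : Finset ℕ, GreedySet f x m s A ∧
    ∃ y : X, msupp f y ⊆ (A : Set ℕ) ∧
      ∀ z : X, (msupp f z).Finite → wsum w (msupp f z) ≤ wsum w (A : Set ℕ) →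
        ‖x - y‖ ≤ C * ‖x - z‖

/-- `ℬ` is `C`-`s`-`w`-almost semi-greedy. -/
def AlmostSemiGreedy (e : ℕ → X) (f : ℕ → X →L[𝕜] 𝕜) (w : ℕ → ℝ) (C s : ℝ) : Prop :=
  ∀ (x : X) (m : ℕ), ∃ A : Finset ℕ, GreedySet f x m s A ∧
    ∃ y : X, msupp f y ⊆ (A : Set ℕ) ∧
      ∀ B : Finset ℕ, wsum w (B : Set ℕ) ≤ wsum w (A : Set ℕ) →
        ‖x - y‖ ≤ C * ‖x - proj e f B x‖

/-- `ℬ` is `C`-`w`-almost greedy. -/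
def AlmostGreedy (e : ℕ → X) (f : ℕ → X →L[𝕜] 𝕜) (w : ℕ → ℝ) (C : ℝ) : Prop :=
  ∀ (x : X) (m : ℕ) (A : Finset ℕ), GreedySet f x m 1 A →
    ∀ B : Finset ℕ, wsum w (B : Set ℕ) ≤ wsum w (A : Set ℕ) →
      ‖x - proj e f A x‖ ≤ C * ‖x - proj e f B x‖

/-- `ℬ` is `C`-`w`-disjoint almost greedy. -/
def DisjointAlmostGreedy (e : ℕ → X) (f : ℕ → X →L[𝕜] 𝕜) (w : ℕ → ℝ) (C : ℝ) : Prop :=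
  ∀ (x : X) (m : ℕ) (A : Finset ℕ), GreedySet f x m 1 A →
    ∀ B : Finset ℕ, wsum w (B : Set ℕ) ≤ wsum w (A : Set ℕ) → Disjoint B A →
      ‖x - proj e f A x‖ ≤ C * ‖x - proj e f B x‖

/-- `ℬ` is `C`-`s`-`w`-almost greedy in the weak sense. -/
def WeakAlmostGreedy (e : ℕ → X) (f : ℕ → X →L[𝕜] 𝕜) (w : ℕ → ℝ) (C s : ℝ) : Prop :=
  ∀ (x : X) (m : ℕ), ∃ A : Finset ℕ, GreedySet f x m s A ∧
    ∀ B : Finset ℕ, wsum w (B : Set ℕ) ≤ wsum w (A : Set ℕ) →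
      ‖x - proj e f A x‖ ≤ C * ‖x - proj e f B x‖

/-- `ℬ` is `C`-`w`-superdemocratic. -/
def SuperDemocratic (e : ℕ → X) (f : ℕ → X →L[𝕜] 𝕜) (w : ℕ → ℝ) (C : ℝ) : Prop :=
  ∀ (A B : Finset ℕ) (ε ε' : ℕ → 𝕜), (∀ i ∈ A, ‖ε i‖ = 1) → (∀ i ∈ B, ‖ε' i‖ = 1) →
    wsum w (A : Set ℕ) ≤ wsum w (B : Set ℕ) →
      ‖∑ i ∈ A, ε i • e i‖ ≤ C * ‖∑ i ∈ B, ε' i • e i‖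

/-- `ℬ` is `C`-`w`-democratic. -/
def Democratic (e : ℕ → X) (f : ℕ → X →L[𝕜] 𝕜) (w : ℕ → ℝ) (C : ℝ) : Prop :=
  ∀ A B : Finset ℕ, wsum w (A : Set ℕ) ≤ wsum w (B : Set ℕ) →
    ‖∑ i ∈ A, e i‖ ≤ C * ‖∑ i ∈ B, e i‖

/-- `ℬ` is `C`-truncation quasi-greedy. -/
def TruncationQuasiGreedy (e : ℕ → X) (f : ℕ → X →L[𝕜] 𝕜) (C : ℝ) : Prop :=
  ∀ (x : X) (m : ℕ) (A : Finset ℕ) (hA : A.Nonempty), GreedySet f x m 1 A →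
    (A.inf' hA fun i => ‖f i x‖) * ‖∑ i ∈ A, sgn (f i x) • e i‖ ≤ C * ‖x‖

/-- `ℬ` has the `C`-`w`-Property (A). -/
def PropertyA (e : ℕ → X) (f : ℕ → X →L[𝕜] 𝕜) (w : ℕ → ℝ) (C : ℝ) : Prop :=
  ∀ x : X, (∀ i, ‖f i x‖ ≤ 1) →
    ∀ A B : Finset ℕ, wsum w (A : Set ℕ) ≤ wsum w (B : Set ℕ) → Disjoint A B →
      (∀ i ∈ A ∪ B, f i x = 0) →
      ∀ ε ε' : ℕ → 𝕜, (∀ i ∈ A, ‖ε i‖ = 1) → (∀ i ∈ B, ‖ε' i‖ = 1) →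
        ‖x + ∑ i ∈ A, ε i • e i‖ ≤ C * ‖x + ∑ i ∈ B, ε' i • e i‖

/-- The finite dimensional separation property (FDSP) with constant `M`. -/
def FDSP (e : ℕ → X) (M : ℝ) : Prop :=
  ∀ Z : Submodule 𝕜 X, IsClosed (Z : Set X) → TopologicalSpace.IsSeparable (Z : Set X) →
    ∀ ε : ℝ, 0 < ε → ∃ k : ℕ → ℕ, StrictMono k ∧
      (∀ (a : ℕ → 𝕜) (n l : ℕ), n ≤ l →
        ‖∑ j ∈ Finset.range (n + 1), a j • e (k j)‖ ≤
          (M + ε) * ‖∑ j ∈ Finset.range (l + 1), a j • e (k j)‖) ∧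
      (∀ F : Submodule 𝕜 X, F ≤ Z → FiniteDimensional 𝕜 F →
        ∃ N : ℕ, ∀ x ∈ F,
          ∀ z ∈ closure ((Submodule.span 𝕜 {v : X | ∃ n, N < n ∧ v = e (k n)} :
              Submodule 𝕜 X) : Set X),
            ‖x‖ ≤ (M + ε) * ‖x + z‖)

/-- `v` is a block basis of `e`. -/
def IsBlockBasis (e v : ℕ → X) : Prop :=
  ∃ (b : ℕ → 𝕜) (n m : ℕ → ℕ), (∀ i, n i ≤ m i) ∧ (∀ i, m i < n (i + 1)) ∧
    (∀ i, v i = ∑ k ∈ Finset.Icc (n i) (m i), b k • e k) ∧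
    (∀ i, ∃ k ∈ Finset.Icc (n i) (m i), b k ≠ 0)


section Aux

variable {𝕜 : Type*} [RCLike 𝕜] {X : Type*} [NormedAddCommGroup X] [NormedSpace 𝕜 X]

private lemma coef_finsum (e : ℕ → X) (f : ℕ → X →L[𝕜] 𝕜)
    (hbio : ∀ i j, f i (e j) = if i = j then 1 else 0)
    (S : Finset ℕ) (c : ℕ → 𝕜) (k : ℕ) :
    f k (∑ i ∈ S, c i • e i) = if k ∈ S then c k else 0 := by
  rw [map_sum]
  have h : ∀ i ∈ S, f k (c i • e i) = if k = i then c i else 0 := by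
    intro i _
    rw [map_smul, hbio, smul_eq_mul, mul_ite, mul_one, mul_zero]
  rw [Finset.sum_congr rfl h, Finset.sum_ite_eq]

private lemma repr_msupp (e : ℕ → X) (f : ℕ → X →L[𝕜] 𝕜)
    (hbio : ∀ i j, f i (e j) = if i = j then 1 else 0)
    (ht : ∀ x : X, (∀ i, f i x = 0) → x = 0)
    {y : X} {S : Finset ℕ} (h : msupp f y ⊆ (S : Set ℕ)) :
    y = ∑ i ∈ S, f i y • e i := by
  have h0 : ∀ k, f k (y - ∑ i ∈ S, f i y • e i) = 0 := by
    intro k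
    rw [map_sub, coef_finsum e f hbio]
    by_cases hk : k ∈ S
    · rw [if_pos hk, sub_self]
    · rw [if_neg hk, sub_zero]
      by_contra hne
      exact hk (Finset.mem_coe.mp (h hne))
  exact sub_eq_zero.mp (ht _ h0)

end Aux

set_option maxHeartbeats 1000000 in
/-- upper bounds for norms of sign-indicator sums, functionals, and the
conditionality parameters of a w-semi-greedy basis. -/
theorem statement12 {𝕜 : Type*} [RCLike 𝕜] {X : Type*} [NormedAddCommGroup X]
    [NormedSpace 𝕜 X] [CompleteSpace X]
    (e : ℕ → X) (f : ℕ → X →L[𝕜] 𝕜) (hbasis : IsMarkushevichBasis e f)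
    (w : ℕ → ℝ) (hw : ∀ i, 0 < w i)
    (C s : ℝ) (hC : 0 < C) (hs0 : 0 < s) (hs1 : s ≤ 1)
    (hsg : SemiGreedy e f w C s)
    (C₁ : ℝ)
    (hC₁ : C₁ = 3 * C * s⁻¹ * (1 + (⨆ i, ‖e i‖) * (⨆ i, ‖f i‖)) * (⨆ i, ‖e i‖) *
      max (2 * ⨅ j, (w j)⁻¹) 1) :
    (∀ (A : Finset ℕ) (ε : ℕ → 𝕜), (∀ i ∈ A, ‖ε i‖ = 1) →
      ‖∑ i ∈ A, ε i • e i‖ ≤ C₁ * max (∑ i ∈ A, w i) 1) ∧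
    (∀ g : X →L[𝕜] 𝕜, ‖g‖ = 1 → wsum w {j | C₁ * w j < ‖g (e j)‖} ≤ 1) ∧
    (∀ (m : ℕ) (W : ℝ), (∀ B : Finset ℕ, B.card ≤ m → (∑ i ∈ B, w i) ≤ W) →
      ∀ A : Finset ℕ, A.card ≤ m → ∀ x : X,
        ‖proj e f A x‖ ≤ C₁ * (⨆ i, ‖f i‖) * max W 1 * ‖x‖) := by
  obtain ⟨hbio, _hdense, ht, hbE, hbF⟩ := hbasis
  set lam := ⨆ i, ‖e i‖ with hlam_def
  set lam' := ⨆ i, ‖f i‖ with hlam'_def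
  set δ := ⨅ j, (w j)⁻¹ with hδ_def
  set K := 2 * C * s⁻¹ * (1 + lam * lam') * lam with hK_def
  have he_le : ∀ i, ‖e i‖ ≤ lam := fun i => le_ciSup hbE i
  have hf_le : ∀ i, ‖f i‖ ≤ lam' := fun i => le_ciSup hbF i
  have he0 : e 0 ≠ 0 := by
    intro h
    have h1 := hbio 0 0
    rw [h] at h1
    simp at h1
  have hf0 : f 0 ≠ 0 := by
    intro h
    have h1 := hbio 0 0
    rw [h] at h1
    simp at h1
  have hlam0 : 0 < lam := lt_of_lt_of_le (norm_pos_iff.mpr he0) (he_le 0)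
  have hlam'0 : 0 < lam' := lt_of_lt_of_le (norm_pos_iff.mpr hf0) (hf_le 0)
  have hll : (0:ℝ) ≤ lam * lam' := by positivity
  have hδ0 : (0:ℝ) ≤ δ := le_ciInf fun j => inv_nonneg.mpr (hw j).le
  have hsinv : (1:ℝ) ≤ s⁻¹ := by
    have h1 := mul_inv_cancel₀ (ne_of_gt hs0)
    nlinarith [inv_pos.mpr hs0]
  -- C ≥ 1, via the m = 0 instance of semi-greediness
  have hConeLe : (1:ℝ) ≤ C := by
    obtain ⟨G, ⟨hcard, _⟩, y, hysupp, hy⟩ := hsg (e 0) 0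
    have hG : G = ∅ := Finset.card_eq_zero.mp hcard
    subst hG
    have hy0 : y = 0 := by
      apply ht
      intro i
      by_contra hne
      have h2 : i ∈ msupp f y := hne
      have h3 := hysupp h2
      simp at h3
    have hm0 : msupp f (0 : X) = ∅ := by
      ext i; simp [msupp]
    have h0 := hy 0 (by rw [hm0]; exact Set.finite_empty)
      (le_of_eq (by rw [hm0, Finset.coe_empty]))
    rw [hy0, sub_zero] at h0
    have h1 : 0 < ‖e 0‖ := norm_pos_iff.mpr he0
    nlinarith
  have hK0 : (0:ℝ) ≤ K := by
    rw [hK_def]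
    have h1 : (0:ℝ) ≤ 2 * C := by linarith
    have h2 : (0:ℝ) ≤ s⁻¹ := by positivity
    have h3 : (0:ℝ) ≤ 1 + lam * lam' := by linarith
    exact mul_nonneg (mul_nonneg (mul_nonneg h1 h2) h3) hlam0.le
  have hC₁K : C₁ = 3/2 * K * max (2*δ) 1 := by
    rw [hC₁, hK_def]; ring
  have hC₁0 : (0:ℝ) ≤ C₁ := by
    rw [hC₁K]
    have h1 : (0:ℝ) ≤ max (2*δ) 1 := le_trans zero_le_one (le_max_right _ _)
    nlinarith
  have hlamK : lam ≤ K := by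
    rw [hK_def]
    have hq : (1:ℝ) ≤ C * s⁻¹ := by nlinarith
    nlinarith [mul_nonneg (sub_nonneg.mpr hq) hlam0.le,
      mul_nonneg (mul_nonneg (sub_nonneg.mpr hq) hll) hlam0.le,
      mul_nonneg hll hlam0.le]
  -- wsum basics
  have wsum_mono : ∀ S T : Set ℕ, S ⊆ T → wsum w S ≤ wsum w T := by
    intro S T hST
    unfold wsum
    rw [tsum_subtype S fun i => ENNReal.ofReal (w i),
      tsum_subtype T fun i => ENNReal.ofReal (w i)]
    exact ENNReal.tsum_le_tsum fun i =>
      Set.indicator_le_indicator_of_subset hST (fun a => zero_le) i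
  have wsum_coe : ∀ F : Finset ℕ, wsum w (F : Set ℕ) = ENNReal.ofReal (∑ i ∈ F, w i) := by
    intro F
    unfold wsum
    rw [ENNReal.ofReal_sum_of_nonneg fun i _ => (hw i).le]
    exact Finset.tsum_subtype' F fun i => ENNReal.ofReal (w i)
  -- Key Lemma: sign-sums over sets dominated by a single outside weight
  have KeyL1 : ∀ (S : Finset ℕ) (ε : ℕ → 𝕜), (∀ i ∈ S, ‖ε i‖ = 1) →
      ∀ j₀, j₀ ∉ S → (∑ i ∈ S, w i) ≤ w j₀ → ‖∑ i ∈ S, ε i • e i‖ ≤ K := by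
    intro S ε hε j₀ hj₀ hwS
    set c : 𝕜 := ((2 * s⁻¹ : ℝ) : 𝕜) with hc_def
    have hcnorm : ‖c‖ = 2 * s⁻¹ := by
      rw [hc_def, RCLike.norm_ofReal, abs_of_pos (by positivity)]
    set zS : X := ∑ i ∈ S, ε i • e i with hzS_def
    set x : X := zS + c • e j₀ with hx_def
    have hcoefx : ∀ k, f k x = (if k ∈ S then ε k else 0) + (if k = j₀ then c else 0) := by
      intro k
      rw [hx_def, map_add, hzS_def, coef_finsum e f hbio, map_smul, hbio, smul_eq_mul,
        mul_ite, mul_one, mul_zero]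
    have hfj₀x : f j₀ x = c := by
      rw [hcoefx j₀, if_neg hj₀, if_pos rfl, zero_add]
    obtain ⟨G, ⟨hcard, hgreedy⟩, y, hysupp, hy⟩ := hsg x 1
    obtain ⟨i₀, hGi⟩ := Finset.card_eq_one.mp hcard
    have hi₀ : i₀ = j₀ := by
      by_contra hne
      have hj₀G : j₀ ∉ G := by
        rw [hGi, Finset.mem_singleton]
        exact fun h => hne h.symm
      have h2 := hgreedy i₀ (by rw [hGi]; exact Finset.mem_singleton_self i₀) j₀ hj₀G
      rw [hfj₀x, hcnorm] at h2
      have h3 : s * (2 * s⁻¹) = 2 := by field_simp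
      rw [h3] at h2
      have h4 : ‖f i₀ x‖ ≤ 1 := by
        rw [hcoefx i₀, if_neg hne, add_zero]
        by_cases hiS : i₀ ∈ S
        · rw [if_pos hiS, hε i₀ hiS]
        · rw [if_neg hiS, norm_zero]; linarith
      linarith
    rw [hi₀] at hGi
    have hmz : msupp f zS ⊆ (S : Set ℕ) := by
      intro k hk
      by_contra hkS
      exact hk (by
        rw [hzS_def, coef_finsum e f hbio, if_neg (fun h => hkS (Finset.mem_coe.mpr h))])
    have hz1 : (msupp f zS).Finite := Set.Finite.subset S.finite_toSet hmz
    have hz2 : wsum w (msupp f zS) ≤ wsum w (G : Set ℕ) := by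
      calc wsum w (msupp f zS) ≤ wsum w (S : Set ℕ) := wsum_mono _ _ hmz
        _ = ENNReal.ofReal (∑ i ∈ S, w i) := wsum_coe S
        _ ≤ ENNReal.ofReal (w j₀) := ENNReal.ofReal_le_ofReal hwS
        _ = wsum w (G : Set ℕ) := by rw [hGi, wsum_coe, Finset.sum_singleton]
    have hxy := hy zS hz1 hz2
    have hxz : x - zS = c • e j₀ := by rw [hx_def]; exact add_sub_cancel_left zS (c • e j₀)
    rw [hxz, norm_smul, hcnorm] at hxy
    have hbd : ‖x - y‖ ≤ C * (2 * s⁻¹ * lam) := by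
      have h6 : ‖e j₀‖ ≤ lam := he_le j₀
      have h7 : (0:ℝ) < 2 * s⁻¹ := by positivity
      nlinarith [mul_le_mul_of_nonneg_left h6 (mul_pos hC h7).le]
    have hyrep : y = f j₀ y • e j₀ := by
      have h8 : msupp f y ⊆ (({j₀} : Finset ℕ) : Set ℕ) := by
        rw [hGi] at hysupp; exact hysupp
      exact (repr_msupp e f hbio ht h8).trans (Finset.sum_singleton _ _)
    have hfdiff : ‖f j₀ y - c‖ ≤ lam' * ‖x - y‖ := by
      have h10 : f j₀ y - c = f j₀ (y - x) := by rw [map_sub, hfj₀x]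
      rw [h10]
      calc ‖f j₀ (y - x)‖ ≤ ‖f j₀‖ * ‖y - x‖ := (f j₀).le_opNorm _
        _ ≤ lam' * ‖x - y‖ := by
            rw [norm_sub_rev]
            exact mul_le_mul_of_nonneg_right (hf_le j₀) (norm_nonneg _)
    have hsplit : zS = (x - y) + (f j₀ y - c) • e j₀ := by
      rw [sub_smul, ← hyrep, hx_def]; abel
    calc ‖zS‖ = ‖(x - y) + (f j₀ y - c) • e j₀‖ := by rw [← hsplit]
      _ ≤ ‖x - y‖ + ‖(f j₀ y - c) • e j₀‖ := norm_add_le _ _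
      _ ≤ ‖x - y‖ + (lam' * ‖x - y‖) * lam := by
          rw [norm_smul]
          have h11 := mul_le_mul hfdiff (he_le j₀) (norm_nonneg _)
            (mul_nonneg hlam'0.le (norm_nonneg _))
          linarith
      _ ≤ K := by
          rw [hK_def]
          have h12 : ‖x - y‖ * (1 + lam * lam') ≤ C * (2 * s⁻¹ * lam) * (1 + lam * lam') :=
            mul_le_mul_of_nonneg_right hbd (by linarith)
          have h13 : ‖x - y‖ + lam' * ‖x - y‖ * lam = ‖x - y‖ * (1 + lam * lam') := by ring
          have h14 : C * (2 * s⁻¹ * lam) * (1 + lam * lam')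
              = 2 * C * s⁻¹ * (1 + lam * lam') * lam := by ring
          linarith
  -- existence of a dominating outside index when δ · w(S) < 1
  have exists_big : ∀ S : Finset ℕ, S.Nonempty → δ * (∑ i ∈ S, w i) < 1 →
      ∃ j₀, j₀ ∉ S ∧ (∑ i ∈ S, w i) ≤ w j₀ := by
    intro S hS h
    have hW : 0 < ∑ i ∈ S, w i := Finset.sum_pos (fun i _ => hw i) hS
    have hδlt : δ < (∑ i ∈ S, w i)⁻¹ := by
      have h2 : δ * (∑ i ∈ S, w i) < (∑ i ∈ S, w i)⁻¹ * (∑ i ∈ S, w i) := by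
        rw [inv_mul_cancel₀ (ne_of_gt hW)]; exact h
      exact lt_of_mul_lt_mul_right h2 hW.le
    rw [hδ_def] at hδlt
    obtain ⟨j, hj⟩ := exists_lt_of_ciInf_lt hδlt
    have hwj : (∑ i ∈ S, w i) < w j := by
      have h5 : (w j)⁻¹ * (w j * (∑ i ∈ S, w i)) < (∑ i ∈ S, w i)⁻¹ * (w j * (∑ i ∈ S, w i)) :=
        mul_lt_mul_of_pos_right hj (mul_pos (hw j) hW)
      rw [← mul_assoc, inv_mul_cancel₀ (ne_of_gt (hw j)), one_mul] at h5
      rw [show (∑ i ∈ S, w i)⁻¹ * (w j * (∑ i ∈ S, w i))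
          = w j * ((∑ i ∈ S, w i)⁻¹ * (∑ i ∈ S, w i)) from by ring,
        inv_mul_cancel₀ (ne_of_gt hW), mul_one] at h5
      exact h5
    refine ⟨j, ?_, hwj.le⟩
    intro hjS
    have h4 : w j ≤ ∑ i ∈ S, w i := Finset.single_le_sum (fun i _ => (hw i).le) hjS
    linarith
  have KeyL2 : ∀ (S : Finset ℕ) (ε : ℕ → 𝕜), (∀ i ∈ S, ‖ε i‖ = 1) → S.Nonempty →
      δ * (∑ i ∈ S, w i) < 1 → ‖∑ i ∈ S, ε i • e i‖ ≤ K := by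
    intro S ε hε hS h
    obtain ⟨j₀, hj₀, hle⟩ := exists_big S hS h
    exact KeyL1 S ε hε j₀ hj₀ hle
  -- inductive bound for arbitrary sets
  have bound_aux : ∀ (n : ℕ) (A : Finset ℕ), A.card ≤ n → ∀ ε : ℕ → 𝕜,
      (∀ i ∈ A, ‖ε i‖ = 1) → ‖∑ i ∈ A, ε i • e i‖ ≤ K * (2 * δ * (∑ i ∈ A, w i) + 1) := by
    intro n
    induction n with
    | zero =>
      intro A hA ε hε
      have hAe : A = ∅ := Finset.card_eq_zero.mp (Nat.le_zero.mp hA)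
      subst hAe
      simp only [Finset.sum_empty, norm_zero, mul_zero, zero_add, mul_one]
      exact hK0
    | succ n ih =>
      intro A hA ε hε
      have hwA0 : (0:ℝ) ≤ ∑ i ∈ A, w i := Finset.sum_nonneg fun i _ => (hw i).le
      by_cases hcase : δ * (∑ i ∈ A, w i) < 1
      · rcases Finset.eq_empty_or_nonempty A with rfl | hAne
        · simp only [Finset.sum_empty, norm_zero, mul_zero, zero_add, mul_one]
          exact hK0
        · have h1 := KeyL2 A ε hε hAne hcase
          nlinarith [mul_nonneg (mul_nonneg hδ0 hwA0) hK0]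
      · push_neg at hcase
        set 𝒮 := A.powerset.filter (fun P => 1/2 ≤ δ * ∑ i ∈ P, w i) with h𝒮
        have hA𝒮 : A ∈ 𝒮 := by
          rw [h𝒮, Finset.mem_filter, Finset.mem_powerset]
          exact ⟨Finset.Subset.refl A, by linarith⟩
        obtain ⟨P, hPmem, hPmin⟩ := Finset.exists_min_image 𝒮 Finset.card ⟨A, hA𝒮⟩
        rw [h𝒮, Finset.mem_filter, Finset.mem_powerset] at hPmem
        obtain ⟨hPA, hPw⟩ := hPmem
        have hPne : P.Nonempty := by
          rcases Finset.eq_empty_or_nonempty P with rfl | h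
          · simp only [Finset.sum_empty, mul_zero] at hPw; linarith
          · exact h
        have hPbound : ‖∑ i ∈ P, ε i • e i‖ ≤ K := by
          by_cases hc1 : P.card = 1
          · obtain ⟨i, rfl⟩ := Finset.card_eq_one.mp hc1
            rw [Finset.sum_singleton, norm_smul,
              hε i (hPA (Finset.mem_singleton_self i)), one_mul]
            exact le_trans (he_le i) hlamK
          · obtain ⟨i, hiP⟩ := hPne
            have hcard2 : 2 ≤ P.card := by
              have hp := Finset.card_pos.mpr ⟨i, hiP⟩
              omega
            have herase : δ * (∑ j ∈ P.erase i, w j) < 1/2 := by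
              by_contra hcon
              push_neg at hcon
              have hmem : P.erase i ∈ 𝒮 := by
                rw [h𝒮, Finset.mem_filter, Finset.mem_powerset]
                exact ⟨(Finset.erase_subset i P).trans hPA, hcon⟩
              have h5 := hPmin _ hmem
              have h6 : (P.erase i).card < P.card := Finset.card_erase_lt_of_mem hiP
              omega
            have hsingle : δ * w i < 1/2 := by
              by_contra hcon
              push_neg at hcon
              have hmem : ({i} : Finset ℕ) ∈ 𝒮 := by
                rw [h𝒮, Finset.mem_filter, Finset.mem_powerset]
                refine ⟨Finset.singleton_subset_iff.mpr (hPA hiP), ?_⟩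
                rw [Finset.sum_singleton]; exact hcon
              have h5 := hPmin _ hmem
              rw [Finset.card_singleton] at h5
              omega
            have hPsum : δ * (∑ j ∈ P, w j) < 1 := by
              have h7 : ∑ j ∈ P, w j = w i + ∑ j ∈ P.erase i, w j :=
                (Finset.add_sum_erase P w hiP).symm
              rw [h7, mul_add]
              linarith
            exact KeyL2 P ε (fun j hj => hε j (hPA hj)) ⟨i, hiP⟩ hPsum
        have hcardle : (A \ P).card ≤ n := by
          have h8 := Finset.card_sdiff_of_subset hPA
          have h9 : 1 ≤ P.card := Finset.card_pos.mpr hPne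
          have h10 : P.card ≤ A.card := Finset.card_le_card hPA
          omega
        have hIH := ih (A \ P) hcardle ε fun i hi => hε i (Finset.mem_sdiff.mp hi).1
        have hsumsplit : ∑ i ∈ A, ε i • e i
            = (∑ i ∈ A \ P, ε i • e i) + ∑ i ∈ P, ε i • e i := (Finset.sum_sdiff hPA).symm
        have hwsplit : ∑ i ∈ A, w i = (∑ i ∈ A \ P, w i) + ∑ i ∈ P, w i :=
          (Finset.sum_sdiff hPA).symm
        calc ‖∑ i ∈ A, ε i • e i‖ ≤ ‖∑ i ∈ A \ P, ε i • e i‖ + ‖∑ i ∈ P, ε i • e i‖ := by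
              rw [hsumsplit]; exact norm_add_le _ _
          _ ≤ K * (2 * δ * (∑ i ∈ A \ P, w i) + 1) + K := add_le_add hIH hPbound
          _ ≤ K * (2 * δ * (∑ i ∈ A, w i) + 1) := by
              rw [hwsplit]
              nlinarith [mul_nonneg hK0 (by linarith : (0:ℝ) ≤ 2 * δ * (∑ i ∈ P, w i) - 1)]
  -- Part (i)
  have part1 : ∀ (A : Finset ℕ) (ε : ℕ → 𝕜), (∀ i ∈ A, ‖ε i‖ = 1) →
      ‖∑ i ∈ A, ε i • e i‖ ≤ C₁ * max (∑ i ∈ A, w i) 1 := by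
    intro A ε hε
    have hwA0 : (0:ℝ) ≤ ∑ i ∈ A, w i := Finset.sum_nonneg fun i _ => (hw i).le
    have hmax1 : (1:ℝ) ≤ max (∑ i ∈ A, w i) 1 := le_max_right _ _
    have hmaxw : (∑ i ∈ A, w i) ≤ max (∑ i ∈ A, w i) 1 := le_max_left _ _
    have hmd : (2*δ:ℝ) ≤ max (2*δ) 1 := le_max_left _ _
    have hmd1 : (1:ℝ) ≤ max (2*δ) 1 := le_max_right _ _
    by_cases hcase : δ * (∑ i ∈ A, w i) < 1
    · rcases Finset.eq_empty_or_nonempty A with rfl | hAne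
      · simp only [Finset.sum_empty, norm_zero]
        exact mul_nonneg hC₁0 (le_trans zero_le_one (le_max_right _ _))
      · have h1 := KeyL2 A ε hε hAne hcase
        rw [hC₁K]
        nlinarith [hK0, mul_nonneg hK0 (sub_nonneg.mpr hmd1),
          mul_nonneg (mul_nonneg hK0 (sub_nonneg.mpr hmd1)) (sub_nonneg.mpr hmax1),
          mul_nonneg hK0 (sub_nonneg.mpr hmax1)]
    · push_neg at hcase
      have h1 := bound_aux A.card A le_rfl ε hε
      rw [hC₁K]
      have hMM : 2 * δ * (∑ i ∈ A, w i) ≤ max (2*δ) 1 * max (∑ i ∈ A, w i) 1 :=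
        mul_le_mul hmd hmaxw hwA0 (le_trans zero_le_one hmd1)
      nlinarith [hK0, mul_le_mul_of_nonneg_left hMM hK0,
        mul_le_mul_of_nonneg_left hcase hK0]
  -- sgn basics
  have hsgn_norm : ∀ t : 𝕜, t ≠ 0 → ‖sgn t‖ = 1 := by
    intro t htne
    simp only [sgn]
    rw [if_neg htne, norm_div, RCLike.norm_ofReal, abs_norm]
    exact div_self (norm_ne_zero_iff.mpr htne)
  have hsgn_mul : ∀ t : 𝕜, t ≠ 0 → sgn t * t = ((‖t‖ : ℝ) : 𝕜) := by
    intro t htne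
    simp only [sgn]
    rw [if_neg htne, div_mul_cancel₀ _ htne]
  -- Part (ii)
  have part2 : ∀ g : X →L[𝕜] 𝕜, ‖g‖ = 1 → wsum w {j | C₁ * w j < ‖g (e j)‖} ≤ 1 := by
    intro g hg
    have hfin : ∀ F : Finset ℕ, (∀ j ∈ F, C₁ * w j < ‖g (e j)‖) → (∑ i ∈ F, w i) ≤ 1 := by
      intro F hF
      rcases Finset.eq_empty_or_nonempty F with rfl | hFne
      · simp only [Finset.sum_empty]; linarith
      by_contra hcon
      push_neg at hcon
      have hne : ∀ i ∈ F, g (e i) ≠ 0 := by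
        intro i hi h0
        have h1 := hF i hi
        rw [h0, norm_zero] at h1
        nlinarith [mul_nonneg hC₁0 (hw i).le]
      have hεn : ∀ i ∈ F, ‖sgn (g (e i))‖ = 1 := fun i hi => hsgn_norm _ (hne i hi)
      have hre : (∑ i ∈ F, ‖g (e i)‖) = RCLike.re (g (∑ i ∈ F, sgn (g (e i)) • e i)) := by
        rw [map_sum, map_sum]
        refine Finset.sum_congr rfl fun i hi => ?_
        rw [map_smul, smul_eq_mul, hsgn_mul _ (hne i hi), RCLike.ofReal_re]
      have hnorm : (∑ i ∈ F, ‖g (e i)‖) ≤ ‖∑ i ∈ F, sgn (g (e i)) • e i‖ := by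
        rw [hre]
        calc RCLike.re (g (∑ i ∈ F, sgn (g (e i)) • e i))
            ≤ ‖g (∑ i ∈ F, sgn (g (e i)) • e i)‖ := RCLike.re_le_norm _
          _ ≤ ‖g‖ * ‖∑ i ∈ F, sgn (g (e i)) • e i‖ := g.le_opNorm _
          _ = ‖∑ i ∈ F, sgn (g (e i)) • e i‖ := by rw [hg, one_mul]
      have hchain : C₁ * (∑ i ∈ F, w i) < ∑ i ∈ F, ‖g (e i)‖ := by
        rw [Finset.mul_sum]
        exact Finset.sum_lt_sum_of_nonempty hFne hF
      have hup := part1 F (fun i => sgn (g (e i))) hεn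
      rw [max_eq_left hcon.le] at hup
      linarith
    unfold wsum
    rw [ENNReal.tsum_eq_iSup_sum]
    refine iSup_le fun F => ?_
    have himg := Finset.sum_image (f := fun j => ENNReal.ofReal (w j)) (s := F)
      (g := Subtype.val) (fun x _ y _ h => Subtype.ext h)
    rw [← himg, ← ENNReal.ofReal_sum_of_nonneg fun i _ => (hw i).le]
    refine ENNReal.ofReal_le_one.mpr (hfin _ ?_)
    intro j hj
    obtain ⟨x, _, rfl⟩ := Finset.mem_image.mp hj
    exact x.property
  -- convexity decomposition of scalars in the unit ball
  have decomp : ∀ a : 𝕜, ‖a‖ ≤ 1 → ∃ (t : ℝ) (u v : 𝕜), 0 ≤ t ∧ t ≤ 1 ∧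
      ‖u‖ = 1 ∧ ‖v‖ = 1 ∧ a = ((t : ℝ) : 𝕜) * u + ((1 - t : ℝ) : 𝕜) * v := by
    intro a ha
    by_cases h0 : a = 0
    · refine ⟨1/2, 1, -1, by norm_num, by norm_num, norm_one,
        by rw [norm_neg]; exact norm_one, ?_⟩
      subst h0
      push_cast
      ring
    · have hna : ‖a‖ ≠ 0 := norm_ne_zero_iff.mpr h0
      refine ⟨(1 + ‖a‖)/2, ((‖a‖⁻¹ : ℝ) : 𝕜) * a, -(((‖a‖⁻¹ : ℝ) : 𝕜) * a),
        by positivity, by linarith, ?_, ?_, ?_⟩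
      · rw [norm_mul, RCLike.norm_ofReal, abs_of_nonneg (inv_nonneg.mpr (norm_nonneg a))]
        exact inv_mul_cancel₀ hna
      · rw [norm_neg, norm_mul, RCLike.norm_ofReal,
          abs_of_nonneg (inv_nonneg.mpr (norm_nonneg a))]
        exact inv_mul_cancel₀ hna
      · have hkey : (((1 + ‖a‖)/2 : ℝ) : 𝕜) * (((‖a‖⁻¹ : ℝ) : 𝕜) * a)
            + ((1 - (1 + ‖a‖)/2 : ℝ) : 𝕜) * (-(((‖a‖⁻¹ : ℝ) : 𝕜) * a))
            = ((((1 + ‖a‖)/2 - (1 - (1 + ‖a‖)/2)) * ‖a‖⁻¹ : ℝ) : 𝕜) * a := by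
          push_cast
          ring
        rw [hkey, show ((1 + ‖a‖)/2 - (1 - (1 + ‖a‖)/2) : ℝ) = ‖a‖ from by ring,
          mul_inv_cancel₀ hna]
        simp
  -- convexity lemma
  have CL : ∀ (A : Finset ℕ) (a : ℕ → 𝕜) (v₀ : X) (Kb : ℝ),
      (∀ ε : ℕ → 𝕜, (∀ i ∈ A, ‖ε i‖ = 1) → ‖v₀ + ∑ i ∈ A, ε i • e i‖ ≤ Kb) →
      (∀ i ∈ A, ‖a i‖ ≤ 1) → ‖v₀ + ∑ i ∈ A, a i • e i‖ ≤ Kb := by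
    intro A
    induction A using Finset.induction_on with
    | empty =>
      intro a v₀ Kb hyp ha
      have h1 := hyp (fun _ => 1) (fun i hi => by simp at hi)
      simpa using h1
    | @insert i B hiB ih =>
      intro a v₀ Kb hyp ha
      obtain ⟨t, u, v, ht0, ht1, hu, hv, hdec⟩ :=
        decomp (a i) (ha i (Finset.mem_insert_self i B))
      have haB : ∀ j ∈ B, ‖a j‖ ≤ 1 := fun j hj => ha j (Finset.mem_insert_of_mem hj)
      have hyp' : ∀ (c : 𝕜), ‖c‖ = 1 → ∀ ε : ℕ → 𝕜, (∀ j ∈ B, ‖ε j‖ = 1) →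
          ‖(v₀ + c • e i) + ∑ j ∈ B, ε j • e j‖ ≤ Kb := by
        intro c hc ε hε
        have hε' : ∀ j ∈ insert i B, ‖(fun j => if j = i then c else ε j) j‖ = 1 := by
          intro j hj
          by_cases hji : j = i
          · simp only [hji, if_pos rfl]; exact hc
          · simp only [if_neg hji]
            exact hε j (Finset.mem_of_mem_insert_of_ne hj hji)
        have h1 := hyp _ hε'
        rw [Finset.sum_insert hiB] at h1
        simp only [if_pos rfl] at h1
        have h2 : ∑ j ∈ B, (if j = i then c else ε j) • e j = ∑ j ∈ B, ε j • e j :=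
          Finset.sum_congr rfl fun j hj => by
            rw [if_neg (ne_of_mem_of_not_mem hj hiB)]
        rw [h2] at h1
        rw [add_assoc]
        exact h1
      have hsum_u := ih a (v₀ + u • e i) Kb (hyp' u hu) haB
      have hsum_v := ih a (v₀ + v • e i) Kb (hyp' v hv) haB
      have hsc : ((t : ℝ) : 𝕜) + ((1 - t : ℝ) : 𝕜) = 1 := by push_cast; ring
      have h2 : v₀ = ((t : ℝ) : 𝕜) • v₀ + ((1 - t : ℝ) : 𝕜) • v₀ := by
        rw [← add_smul, hsc, one_smul]
      have h3 : (∑ j ∈ B, a j • e j) = ((t : ℝ) : 𝕜) • (∑ j ∈ B, a j • e j)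
          + ((1 - t : ℝ) : 𝕜) • (∑ j ∈ B, a j • e j) := by
        rw [← add_smul, hsc, one_smul]
      have hcomb : v₀ + ∑ j ∈ insert i B, a j • e j
          = ((t : ℝ) : 𝕜) • ((v₀ + u • e i) + ∑ j ∈ B, a j • e j)
            + ((1 - t : ℝ) : 𝕜) • ((v₀ + v • e i) + ∑ j ∈ B, a j • e j) := by
        rw [Finset.sum_insert hiB, hdec, add_smul, mul_smul, mul_smul]
        conv_lhs => rw [h2]
        conv_lhs => rw [h3]
        simp only [smul_add]
        abel
      rw [hcomb]
      have hn1 : ‖((t : ℝ) : 𝕜)‖ = t := by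
        rw [RCLike.norm_ofReal, abs_of_nonneg ht0]
      have hn2 : ‖((1 - t : ℝ) : 𝕜)‖ = 1 - t := by
        rw [RCLike.norm_ofReal, abs_of_nonneg (by linarith)]
      calc ‖((t : ℝ) : 𝕜) • ((v₀ + u • e i) + ∑ j ∈ B, a j • e j)
            + ((1 - t : ℝ) : 𝕜) • ((v₀ + v • e i) + ∑ j ∈ B, a j • e j)‖
          ≤ ‖((t : ℝ) : 𝕜) • ((v₀ + u • e i) + ∑ j ∈ B, a j • e j)‖
            + ‖((1 - t : ℝ) : 𝕜) • ((v₀ + v • e i) + ∑ j ∈ B, a j • e j)‖ := norm_add_le _ _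
        _ = t * ‖(v₀ + u • e i) + ∑ j ∈ B, a j • e j‖
            + (1 - t) * ‖(v₀ + v • e i) + ∑ j ∈ B, a j • e j‖ := by
            rw [norm_smul, norm_smul, hn1, hn2]
        _ ≤ t * Kb + (1 - t) * Kb :=
            add_le_add (mul_le_mul_of_nonneg_left hsum_u ht0)
              (mul_le_mul_of_nonneg_left hsum_v (by linarith))
        _ = Kb := by ring
  refine ⟨part1, part2, ?_⟩
  -- Part (iii)
  intro m W hWb A hA x
  have hwA : (∑ i ∈ A, w i) ≤ W := hWb A hA
  by_cases hx0 : x = 0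
  · subst hx0
    have hp0 : proj e f A (0:X) = 0 := by
      unfold proj
      simp
    rw [hp0]
    simp
  · have hM : 0 < lam' * ‖x‖ := mul_pos hlam'0 (norm_pos_iff.mpr hx0)
    have hb1 : ∀ i ∈ A, ‖(((lam' * ‖x‖)⁻¹ : ℝ) : 𝕜) * f i x‖ ≤ 1 := by
      intro i _
      rw [norm_mul, RCLike.norm_ofReal, abs_of_nonneg (inv_nonneg.mpr hM.le)]
      have h1 : ‖f i x‖ ≤ lam' * ‖x‖ :=
        le_trans ((f i).le_opNorm x) (mul_le_mul_of_nonneg_right (hf_le i) (norm_nonneg x))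
      calc (lam' * ‖x‖)⁻¹ * ‖f i x‖ ≤ (lam' * ‖x‖)⁻¹ * (lam' * ‖x‖) :=
            mul_le_mul_of_nonneg_left h1 (inv_nonneg.mpr hM.le)
        _ = 1 := inv_mul_cancel₀ (ne_of_gt hM)
    have hKb : ∀ ε : ℕ → 𝕜, (∀ i ∈ A, ‖ε i‖ = 1) →
        ‖(0:X) + ∑ i ∈ A, ε i • e i‖ ≤ C₁ * max W 1 := by
      intro ε hε
      rw [zero_add]
      calc ‖∑ i ∈ A, ε i • e i‖ ≤ C₁ * max (∑ i ∈ A, w i) 1 := part1 A ε hε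
        _ ≤ C₁ * max W 1 :=
            mul_le_mul_of_nonneg_left (max_le_max hwA le_rfl) hC₁0
    have hCL := CL A (fun i => (((lam' * ‖x‖)⁻¹ : ℝ) : 𝕜) * f i x) 0 (C₁ * max W 1) hKb hb1
    rw [zero_add] at hCL
    have hsum : (∑ i ∈ A, ((((lam' * ‖x‖)⁻¹ : ℝ) : 𝕜) * f i x) • e i)
        = (((lam' * ‖x‖)⁻¹ : ℝ) : 𝕜) • proj e f A x := by
      unfold proj
      rw [Finset.smul_sum]
      exact Finset.sum_congr rfl fun i _ => mul_smul _ _ _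
    rw [hsum, norm_smul, RCLike.norm_ofReal, abs_of_nonneg (inv_nonneg.mpr hM.le)] at hCL
    have h2 := mul_le_mul_of_nonneg_left hCL hM.le
    rw [← mul_assoc, mul_inv_cancel₀ (ne_of_gt hM), one_mul] at h2
    calc ‖proj e f A x‖ ≤ (lam' * ‖x‖) * (C₁ * max W 1) := h2
      _ = C₁ * lam' * max W 1 * ‖x‖ := by ring


end GreedyPaper
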